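/- arXiv:2403.06830 — 4 statements merged into one kernel-verified Lean document; each statement's English description precedes it below -/
import Mathlib

section
/- In the Hopf algebra H = Õ_q(P) (quotient of Õ_q(GL(2)) by (c)), the element β := t^{-1} n is left H_0-coinvariant, where H_0 = H/(n), and the subalgebra of left H_0-coinvariants of H is generated by β. -/
open TensorProduct

private lemma pow_mul_smul_aux {k R : Type*} [Field k] [Ring R] [Algebra k R]
    (c : k) (x y : R) (h : x * y = c • (y * x)) :
    ∀ a : ℕ, x ^ a * y = c ^ a • (y * x ^ a) := by
  intro a
  induction a with
  | zero => simp
  | succ a ih =>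
    have : x ^ (a + 1) * y = x ^ a * (x * y) := by rw [pow_succ, mul_assoc]
    rw [this, h, mul_smul_comm, ← mul_assoc, ih]
    rw [smul_mul_assoc, smul_smul, mul_assoc, ← pow_succ, mul_comm c, ← pow_succ]

private lemma mul_pow_smul_aux {k R : Type*} [Field k] [Ring R] [Algebra k R]
    (c : k) (x y : R) (h : y * x = c • (x * y)) :
    ∀ r : ℕ, (x * y) ^ r = c ^ (r.choose 2) • (x ^ r * y ^ r) := by
  intro r
  induction r with
  | zero => simp
  | succ r ih =>
    have hyx : y ^ r * x = c ^ r • (x * y ^ r) := pow_mul_smul_aux c y x h r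
    calc (x * y) ^ (r + 1) = (x * y) ^ r * (x * y) := pow_succ _ _
      _ = (c ^ r.choose 2 • (x ^ r * y ^ r)) * (x * y) := by rw [ih]
      _ = c ^ r.choose 2 • (x ^ r * (y ^ r * x) * y) := by
          simp only [smul_mul_assoc, mul_assoc]
      _ = c ^ r.choose 2 • (x ^ r * (c ^ r • (x * y ^ r)) * y) := by rw [hyx]
      _ = (c ^ r.choose 2 * c ^ r) • (x ^ (r + 1) * y ^ (r + 1)) := by
          simp only [mul_smul_comm, smul_mul_assoc, smul_smul, pow_succ]
          congr 1
          noncomm_ring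
      _ = c ^ ((r + 1).choose 2) • (x ^ (r + 1) * y ^ (r + 1)) := by
          rw [← pow_add]
          congr 1
          rw [Nat.choose_succ_succ, Nat.choose_one_right, Nat.add_comm]
/-- In the Hopf algebra `H = Õ_q(P)` (generated by the invertible group-like elements
`t, D̃` and the element `n` with `Δ(n) = t ⊗ n + n ⊗ t⁻¹D̃`, with basis `{D̃^p t^m n^r}`),
the element `β := t⁻¹ n` is left `H₀`-coinvariant, where `H₀ = H/(n)` (whose images
`π(D̃^p t^m)` form a basis), and the subalgebra of left `H₀`-coinvariants of `H`
(for the left coaction `ρ(h) = π(h_(1)) ⊗ h_(2)`) is generated by `β`. -/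
theorem coinvariants_generated_by_beta {k H H₀ : Type*} [Field k]
    [Ring H] [Bialgebra k H] [Ring H₀] [Algebra k H₀]
    (q : k) (hq : q ≠ 0)
    (t Dt : Hˣ) (n : H)
    (htn : (t : H) * n = q⁻¹ • (n * (t : H)))
    (hnD : n * (Dt : H) = (q ^ 2) • ((Dt : H) * n))
    (hgt : ∀ m : ℤ, Coalgebra.comul (R := k) ((t ^ m : Hˣ) : H) =
      ((t ^ m : Hˣ) : H) ⊗ₜ[k] ((t ^ m : Hˣ) : H))
    (hgD : ∀ p : ℤ, Coalgebra.comul (R := k) ((Dt ^ p : Hˣ) : H) =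
      ((Dt ^ p : Hˣ) : H) ⊗ₜ[k] ((Dt ^ p : Hˣ) : H))
    (hΔn : Coalgebra.comul (R := k) n =
      (t : H) ⊗ₜ[k] n + n ⊗ₜ[k] (((t⁻¹ : Hˣ) : H) * (Dt : H)))
    (bH : Module.Basis (ℤ × ℤ × ℕ) k H)
    (hbH : ∀ p m : ℤ, ∀ r : ℕ,
      bH (p, m, r) = ((Dt ^ p : Hˣ) : H) * ((t ^ m : Hˣ) : H) * n ^ r)
    (π : H →ₐ[k] H₀) (hπn : π n = 0)
    (bH₀ : Module.Basis (ℤ × ℤ) k H₀)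
    (hbH₀ : ∀ p m : ℤ, bH₀ (p, m) = π (((Dt ^ p : Hˣ) : H) * ((t ^ m : Hˣ) : H))) :
    (TensorProduct.map π.toLinearMap LinearMap.id)
        (Coalgebra.comul (R := k) (((t⁻¹ : Hˣ) : H) * n)) =
      (1 : H₀) ⊗ₜ[k] (((t⁻¹ : Hˣ) : H) * n) ∧
    ∀ h : H,
      (TensorProduct.map π.toLinearMap LinearMap.id) (Coalgebra.comul (R := k) h) =
          (1 : H₀) ⊗ₜ[k] h ↔
        h ∈ Algebra.adjoin k {((t⁻¹ : Hˣ) : H) * n} := by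
  classical
  set u : H := ((t⁻¹ : Hˣ) : H) with hu
  set β : H := u * n with hβdef
  -- unit facts
  have hut : u * (t : H) = 1 := by rw [hu]; exact Units.inv_mul t
  have htu : (t : H) * u = 1 := by rw [hu]; exact Units.mul_inv t
  -- commutation relations
  have hnu : n * u = q⁻¹ • (u * n) := by
    have h1 : n * u = u * (((t : H) * n) * u) := by
      rw [← mul_assoc, ← mul_assoc, hut, one_mul]
    rw [h1, htn, smul_mul_assoc, mul_smul_comm, mul_assoc, htu, mul_one]
  have hun : u * n = q • (n * u) := by
    rw [hnu, smul_smul, mul_inv_cancel₀ hq, one_smul]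
  -- β powers
  have hβpow : ∀ r : ℕ, u ^ r * n ^ r = q ^ r.choose 2 • β ^ r := by
    intro r
    have := mul_pow_smul_aux (q⁻¹) u n hnu r
    rw [hβdef, this, smul_smul, ← mul_pow, mul_inv_cancel₀ hq, one_pow, one_smul]
  -- comul as algebra morphism
  have hcomul : ∀ x : H, Coalgebra.comul (R := k) x = Bialgebra.comulAlgHom k H x :=
    fun x => rfl
  -- the two summands of Δn commute
  have hnuD : n * (u * (Dt : H)) = q • (u * (Dt : H) * n) := by
    rw [← mul_assoc, hnu, smul_mul_assoc, mul_assoc, hnD, mul_smul_comm, smul_smul,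
      ← mul_assoc, inv_mul_eq_div, pow_two, mul_div_assoc, div_self hq, mul_one]
  have hcommAB : Commute ((t : H) ⊗ₜ[k] n) (n ⊗ₜ[k] (u * (Dt : H))) := by
    show _ * _ = _ * _
    rw [Algebra.TensorProduct.tmul_mul_tmul, Algebra.TensorProduct.tmul_mul_tmul,
      htn, hnuD, ← TensorProduct.smul_tmul', TensorProduct.tmul_smul, smul_smul,
      inv_mul_cancel₀ hq, one_smul]
  -- comul of n^r
  have hΔnr : ∀ r : ℕ, Coalgebra.comul (R := k) (n ^ r) =
      ∑ j ∈ Finset.range (r + 1),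
        ((t : H) ⊗ₜ[k] n) ^ j * (n ⊗ₜ[k] (u * (Dt : H))) ^ (r - j) *
          (r.choose j : H ⊗[k] H) := by
    intro r
    rw [hcomul, map_pow, ← hcomul, hΔn, Commute.add_pow hcommAB]
  -- unit power facts
  have htpow : ∀ r : ℕ, (t : H) ^ r = ((t ^ (r : ℤ) : Hˣ) : H) := by
    intro r; rw [zpow_natCast, ← Units.val_pow_eq_pow_val]
  have hone : (1 : H₀) = bH₀ (0, 0) := by
    rw [hbH₀]; simp
  -- action of the coaction on basis elements
  have hρbasis : ∀ p m : ℤ, ∀ r : ℕ,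
      (TensorProduct.map π.toLinearMap LinearMap.id)
          (Coalgebra.comul (R := k) (bH (p, m, r))) =
        bH₀ (p, m + r) ⊗ₜ[k] bH (p, m, r) := by
    intro p m r
    have hcm : Coalgebra.comul (R := k) (((Dt ^ p : Hˣ) : H) * ((t ^ m : Hˣ) : H) * n ^ r) =
        ∑ j ∈ Finset.range (r + 1),
          ((((Dt ^ p : Hˣ) : H) * ((t ^ m : Hˣ) : H)) ⊗ₜ[k]
              (((Dt ^ p : Hˣ) : H) * ((t ^ m : Hˣ) : H))) *
            (((t : H) ⊗ₜ[k] n) ^ j * (n ⊗ₜ[k] (u * (Dt : H))) ^ (r - j) *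
              (r.choose j : H ⊗[k] H)) := by
      rw [hcomul, map_mul, map_mul, ← hcomul, ← hcomul, ← hcomul,
        hgD p, hgt m, hΔnr r, Algebra.TensorProduct.tmul_mul_tmul, Finset.mul_sum]
    rw [hbH p m r, hcm, map_sum]
    rw [Finset.sum_eq_single_of_mem r (Finset.self_mem_range_succ r) ?other]
    case other =>
      intro j hj hjr
      have hrj : r - j ≠ 0 := by
        simp only [Finset.mem_range] at hj; omega
      set X : H ⊗[k] H :=
        ((((Dt ^ p : Hˣ) : H) * ((t ^ m : Hˣ) : H)) ⊗ₜ[k]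
          (((Dt ^ p : Hˣ) : H) * ((t ^ m : Hˣ) : H))) with hX
      set Z : H ⊗[k] H :=
        ((t : H) ⊗ₜ[k] n) ^ j * (n ⊗ₜ[k] (u * (Dt : H))) ^ (r - j) with hZ
      have hmove : X * (Z * ((r.choose j : ℕ) : H ⊗[k] H)) = (r.choose j) • (X * Z) := by
        rw [← mul_assoc, ← (Nat.cast_commute (r.choose j) (X * Z)).eq, nsmul_eq_mul]
      rw [hmove, map_nsmul]
      have hZ' : X * Z = (((Dt ^ p : Hˣ) : H) * ((t ^ m : Hˣ) : H) * ((t : H) ^ j * n ^ (r - j)))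
          ⊗ₜ[k] (((Dt ^ p : Hˣ) : H) * ((t ^ m : Hˣ) : H) * (n ^ j * (u * (Dt : H)) ^ (r - j))) := by
        rw [hZ, hX, Algebra.TensorProduct.tmul_pow, Algebra.TensorProduct.tmul_pow,
          Algebra.TensorProduct.tmul_mul_tmul, Algebra.TensorProduct.tmul_mul_tmul]
      rw [hZ', TensorProduct.map_tmul]
      have hπ0 : π (((Dt ^ p : Hˣ) : H) * ((t ^ m : Hˣ) : H) * ((t : H) ^ j * n ^ (r - j))) = 0 := by
        simp [map_mul, map_pow, hπn, zero_pow hrj]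
      rw [AlgHom.toLinearMap_apply, hπ0, TensorProduct.zero_tmul, smul_zero]
    · simp only [Nat.choose_self, Nat.cast_one, mul_one, Nat.sub_self, pow_zero,
        Algebra.TensorProduct.tmul_pow, Algebra.TensorProduct.tmul_mul_tmul,
        TensorProduct.map_tmul, LinearMap.id_coe, id_eq, AlgHom.toLinearMap_apply]
      congr 1
      rw [htpow r, mul_assoc, ← Units.val_mul, ← zpow_add, hbH₀]
  -- the linear map whose kernel is the coinvariant space
  set ρ : H →ₗ[k] H₀ ⊗[k] H :=
    (TensorProduct.map π.toLinearMap LinearMap.id) ∘ₗ (Coalgebra.comul (R := k)) with hρ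
  set S : H →ₗ[k] H₀ ⊗[k] H := TensorProduct.mk k H₀ H 1 with hS
  set Ψ : H →ₗ[k] H₀ ⊗[k] H := ρ - S with hΨ
  have hΨapp : ∀ h : H, Ψ h = (TensorProduct.map π.toLinearMap LinearMap.id)
      (Coalgebra.comul (R := k) h) - (1 : H₀) ⊗ₜ[k] h := fun h => rfl
  set f : ℤ × ℤ × ℕ → ℤ × ℤ := fun i => (i.1, i.2.1 + (i.2.2 : ℤ)) with hf
  set g : ℤ × ℤ × ℕ → H₀ ⊗[k] H := fun i => (bH₀ (f i) - bH₀ (0, 0)) ⊗ₜ[k] bH i with hg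
  have hΨconstr : Ψ = bH.constr k g := by
    apply bH.ext
    rintro ⟨p, m, r⟩
    rw [Module.Basis.constr_basis, hΨapp, hρbasis p m r, hg]
    simp only [hf, TensorProduct.sub_tmul, hone]
  set b2 : Module.Basis ((ℤ × ℤ) × (ℤ × ℤ × ℕ)) k (H₀ ⊗[k] H) := bH₀.tensorProduct bH with hb2
  have hg_repr : ∀ i i₀ : ℤ × ℤ × ℕ, ∀ a : ℤ × ℤ,
      b2.repr (g i) (a, i₀) =
        ((if f i = a then (1:k) else 0) - (if ((0:ℤ), (0:ℤ)) = a then (1:k) else 0)) *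
          (if i = i₀ then (1:k) else 0) := by
    intro i i₀ a
    simp only [hg]
    rw [TensorProduct.sub_tmul, map_sub, Finsupp.sub_apply, hb2,
      Module.Basis.tensorProduct_repr_tmul_apply, Module.Basis.tensorProduct_repr_tmul_apply,
      Module.Basis.repr_self, Module.Basis.repr_self, Module.Basis.repr_self, Finsupp.single_apply,
      Finsupp.single_apply, Finsupp.single_apply, sub_mul]
    simp [smul_eq_mul, mul_comm]
  have hker : ∀ h : H, Ψ h = 0 ↔ ∀ i ∈ (bH.repr h).support, f i = (0, 0) := by
    intro h
    constructor
    · intro h0 i₀ hi₀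
      by_contra hne
      have e1 : Ψ h = ((bH.repr h).sum fun i c => c • g i) := by
        rw [hΨconstr, Module.Basis.constr_apply]
      have e2 : b2.repr (Ψ h) (f i₀, i₀) = 0 := by rw [h0]; simp
      rw [e1, map_finsuppSum, Finsupp.sum_apply] at e2
      have e3 : ((bH.repr h).sum fun i c => (b2.repr (c • g i)) (f i₀, i₀)) =
          (bH.repr h) i₀ := by
        rw [Finsupp.sum_eq_single i₀]
        · rw [map_smul, Finsupp.smul_apply, hg_repr, if_pos rfl, if_neg, sub_zero,
            if_pos rfl, mul_one, smul_eq_mul, mul_one]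
          intro hcon
          exact hne hcon.symm
        · intro i hi0 hii₀
          rw [map_smul, Finsupp.smul_apply, hg_repr, if_neg hii₀, mul_zero, smul_zero]
        · intro _; rw [zero_smul, map_zero, Finsupp.coe_zero, Pi.zero_apply]
      rw [e3] at e2
      exact (Finsupp.mem_support_iff.mp hi₀) e2
    · intro hsupp
      rw [hΨconstr, Module.Basis.constr_apply]
      rw [Finsupp.sum]
      apply Finset.sum_eq_zero
      intro i hi
      have hfi : f i = (0, 0) := hsupp i hi
      simp [hg, hfi]
  -- relating the generators to powers of β
  have hgen : ∀ r : ℕ, bH (0, -(r : ℤ), r) = q ^ r.choose 2 • β ^ r := by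
    intro r
    rw [hbH]
    have h1 : ((Dt ^ (0 : ℤ) : Hˣ) : H) = 1 := by simp
    have h2 : ((t ^ (-(r : ℤ)) : Hˣ) : H) = u ^ r := by
      rw [zpow_neg, zpow_natCast, ← inv_pow, hu, Units.val_pow_eq_pow_val]
    rw [h1, h2, one_mul, hβpow]
  have hβgen : ∀ r : ℕ, β ^ r = (q ^ r.choose 2)⁻¹ • bH (0, -(r : ℤ), r) := by
    intro r
    rw [hgen, smul_smul, inv_mul_cancel₀ (pow_ne_zero _ hq), one_smul]
  -- kernel = span of generators
  have hkerspan : LinearMap.ker Ψ =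
      Submodule.span k (Set.range fun r : ℕ => bH (0, -(r : ℤ), r)) := by
    apply le_antisymm
    · intro h hh
      rw [LinearMap.mem_ker, hker] at hh
      have hrepr : h = (bH.repr h).sum fun i c => c • bH i := by
        conv_lhs => rw [← bH.linearCombination_repr h]
        rw [Finsupp.linearCombination_apply]
      rw [hrepr]
      apply Submodule.sum_mem
      intro i hi
      apply Submodule.smul_mem
      apply Submodule.subset_span
      obtain ⟨p, m, r⟩ := i
      have hfi := hh (p, m, r) hi
      simp only [hf, Prod.mk.injEq] at hfi
      refine ⟨r, ?_⟩
      show bH (0, -(r : ℤ), r) = bH (p, m, r)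
      have e1 : p = 0 := hfi.1
      have e2 : m = -(r : ℤ) := by omega
      rw [e1, e2]
    · rw [Submodule.span_le]
      rintro _ ⟨r, rfl⟩
      rw [SetLike.mem_coe, LinearMap.mem_ker, hΨconstr, Module.Basis.constr_basis]
      simp [hg, hf]
  -- adjoin = span of generators
  have hadj : (Algebra.adjoin k {β} : Set H) =
      (Submodule.span k (Set.range fun r : ℕ => bH (0, -(r : ℤ), r)) : Set H) := by
    have hset : (Submonoid.closure {β} : Set H) = Set.range (β ^ ·) := by
      ext y
      simp [Submonoid.mem_closure_singleton, eq_comm]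
    have h1 : Subalgebra.toSubmodule (Algebra.adjoin k {β}) =
        Submodule.span k (Set.range (β ^ ·)) := by
      rw [Algebra.adjoin_eq_span, hset]
    have h2 : Submodule.span k (Set.range (β ^ ·)) =
        Submodule.span k (Set.range fun r : ℕ => bH (0, -(r : ℤ), r)) := by
      apply le_antisymm <;> rw [Submodule.span_le] <;> rintro _ ⟨r, rfl⟩ <;>
        rw [SetLike.mem_coe]
      · show β ^ r ∈ _
        rw [hβgen r]
        exact Submodule.smul_mem _ _ (Submodule.subset_span ⟨r, rfl⟩)
      · show bH (0, -(r : ℤ), r) ∈ _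
        rw [hgen r]
        exact Submodule.smul_mem _ _ (Submodule.subset_span ⟨r, rfl⟩)
    have := h1.trans h2
    ext x
    constructor
    · intro hx
      exact this ▸ (Subalgebra.mem_toSubmodule _).mpr hx
    · intro hx
      exact (Subalgebra.mem_toSubmodule _).mp (this ▸ hx)
  have main : ∀ h : H,
      (TensorProduct.map π.toLinearMap LinearMap.id) (Coalgebra.comul (R := k) h) =
          (1 : H₀) ⊗ₜ[k] h ↔ h ∈ Algebra.adjoin k {β} := by
    intro h
    rw [← sub_eq_zero, ← hΨapp, ← LinearMap.mem_ker, hkerspan,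
      show h ∈ Algebra.adjoin k {β} ↔ h ∈ (Algebra.adjoin k {β} : Set H) from Iff.rfl, hadj]
    rfl
  exact ⟨(main β).mpr (Algebra.self_mem_adjoin_singleton k β), main⟩
end

section
/- Let H be a Hopf algebra, J a Hopf ideal, H_0 = H/J with projection π, and let K = {k ∈ H : π(k_(1)) ⊗ k_(2) = 1 ⊗ k} be the left H_0-coinvariants. Then K is stable under the right adjoint action k ◁ h = S(h_(1)) k h_(2) of H. -/
open TensorProduct

section ConvolutionAux

variable {k : Type*} [CommSemiring k]
variable {H : Type*} [Ring H] [HopfAlgebra k H]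
variable {C : Type*} [Ring C] [Algebra k C]

/-- Convolution product on `k`-linear maps from a Hopf algebra `H` to an algebra `C`. -/
noncomputable def cv (L M : H →ₗ[k] C) : H →ₗ[k] C :=
  LinearMap.mul' k C ∘ₗ TensorProduct.map L M ∘ₗ Coalgebra.comul

lemma cv_repr (L M : H →ₗ[k] C) {ι : Type*} {h : H} (r : Coalgebra.Repr k h ι) :
    cv L M h = ∑ i ∈ r.index, L (r.left i) * M (r.right i) := by
  simp only [cv, LinearMap.comp_apply, ← r.eq, map_sum, TensorProduct.map_tmul,
    LinearMap.mul'_apply]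

lemma sum_counit_smul_right {ι : Type*} {h : H} (r : Coalgebra.Repr k h ι) :
    ∑ i ∈ r.index, Coalgebra.counit (R := k) (r.left i) • r.right i = h := by
  have := congrArg (TensorProduct.lid k H) (Coalgebra.sum_counit_tmul_eq r)
  simp only [map_sum, lid_tmul, one_smul] at this
  exact this

lemma sum_smul_counit_left {ι : Type*} {h : H} (r : Coalgebra.Repr k h ι) :
    ∑ i ∈ r.index, Coalgebra.counit (R := k) (r.right i) • r.left i = h := by
  have := congrArg (TensorProduct.rid k H) (Coalgebra.sum_tmul_counit_eq r)
  simp only [map_sum, rid_tmul, one_smul] at this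
  exact this

lemma cv_assoc (L M N : H →ₗ[k] C) : cv (cv L M) N = cv L (cv M N) := by
  ext h
  set r := Coalgebra.Repr.arbitrary k h with hr
  set a₁ : (i : H × H) → Coalgebra.Repr k (r.left i) (H × H) := fun i => Coalgebra.Repr.arbitrary k _
  set a₂ : (i : H × H) → Coalgebra.Repr k (r.right i) (H × H) := fun i => Coalgebra.Repr.arbitrary k _
  have key := Coalgebra.sum_map_tmul_tmul_eq (f := L) (g := M) (h := N) (a := h)
    (repr := r) (a₁ := a₁) (a₂ := a₂)
  have key2 := congrArg (LinearMap.mul' k C ∘ₗ LinearMap.lTensor C (LinearMap.mul' k C)) key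
  simp only [map_sum, LinearMap.comp_apply, LinearMap.lTensor_tmul,
    LinearMap.mul'_apply] at key2
  rw [cv_repr (cv L M) N r, cv_repr L (cv M N) r]
  calc ∑ i ∈ r.index, cv L M (r.left i) * N (r.right i)
      = ∑ i ∈ r.index, ∑ j ∈ (a₁ i).index,
          L ((a₁ i).left j) * (M ((a₁ i).right j) * N (r.right i)) := by
        refine Finset.sum_congr rfl fun i _ => ?_
        rw [cv_repr L M (a₁ i), Finset.sum_mul]
        exact Finset.sum_congr rfl fun j _ => (mul_assoc _ _ _)
    _ = ∑ i ∈ r.index, ∑ j ∈ (a₂ i).index,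
          L (r.left i) * (M ((a₂ i).left j) * N ((a₂ i).right j)) := key2.symm
    _ = ∑ i ∈ r.index, L (r.left i) * cv M N (r.right i) := by
        refine Finset.sum_congr rfl fun i _ => ?_
        rw [cv_repr M N (a₂ i), Finset.mul_sum]

/-- The convolution unit. -/
noncomputable def cvUnit : H →ₗ[k] C :=
  Algebra.linearMap k C ∘ₗ Coalgebra.counit

lemma cvUnit_cv (X : H →ₗ[k] C) : cv cvUnit X = X := by
  ext h
  set r := Coalgebra.Repr.arbitrary k h
  rw [cv_repr cvUnit X r]
  calc ∑ i ∈ r.index, cvUnit (r.left i) * X (r.right i)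
      = ∑ i ∈ r.index, X (Coalgebra.counit (R := k) (r.left i) • r.right i) := by
        refine Finset.sum_congr rfl fun i _ => ?_
        rw [map_smul, cvUnit, LinearMap.comp_apply, Algebra.linearMap_apply,
          ← Algebra.smul_def]
    _ = X h := by rw [← map_sum, sum_counit_smul_right r]

lemma cv_antipode_left (R : H →ₗ[k] C) (hmul : ∀ a b : H, R (a * b) = R a * R b)
    (halg : ∀ c : k, R (algebraMap k H c) = algebraMap k C c) :
    cv (R ∘ₗ HopfAlgebra.antipode k) R = cvUnit := by
  ext h
  set r := Coalgebra.Repr.arbitrary k h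
  rw [cv_repr _ R r]
  calc ∑ i ∈ r.index, (R ∘ₗ HopfAlgebra.antipode k) (r.left i) * R (r.right i)
      = R (∑ i ∈ r.index, HopfAlgebra.antipode (R := k) (r.left i) * r.right i) := by
        rw [map_sum]
        exact Finset.sum_congr rfl fun i _ => (hmul _ _).symm
    _ = cvUnit h := by
        rw [HopfAlgebra.sum_antipode_mul_eq_algebraMap_counit r, halg]
        rfl

end ConvolutionAux

section MapsAux

variable {k : Type*} [CommRing k]
variable {H : Type*} [Ring H] [HopfAlgebra k H]
variable {H₀ : Type*} [Ring H₀] [HopfAlgebra k H₀]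

/-- The map `h ↦ (π ⊗ id)(Δ h)` as a linear map. -/
noncomputable def Tlm (π : H →ₐ[k] H₀) : H →ₗ[k] H₀ ⊗[k] H :=
  TensorProduct.map π.toLinearMap LinearMap.id ∘ₗ Coalgebra.comul

lemma Tlm_repr (π : H →ₐ[k] H₀) {ι : Type*} {h : H} (r : Coalgebra.Repr k h ι) :
    Tlm π h = ∑ i ∈ r.index, π (r.left i) ⊗ₜ[k] r.right i := by
  simp only [Tlm, LinearMap.comp_apply, ← r.eq, map_sum, TensorProduct.map_tmul,
    LinearMap.id_coe, id_eq, AlgHom.toLinearMap_apply]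

lemma map_pi_id_eq (π : H →ₐ[k] H₀) :
    TensorProduct.map π.toLinearMap (LinearMap.id : H →ₗ[k] H) =
      (Algebra.TensorProduct.map π (AlgHom.id k H)).toLinearMap :=
  TensorProduct.ext' fun a b => by simp

lemma Tlm_mul (π : H →ₐ[k] H₀) (a b : H) : Tlm π (a * b) = Tlm π a * Tlm π b := by
  simp only [Tlm, LinearMap.comp_apply, Bialgebra.comul_mul, map_pi_id_eq,
    AlgHom.toLinearMap_apply, map_mul]

lemma Tlm_algebraMap (π : H →ₐ[k] H₀) (c : k) :
    Tlm π (algebraMap k H c) = algebraMap k (H₀ ⊗[k] H) c := by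
  simp only [Tlm, LinearMap.comp_apply, Bialgebra.comul_algebraMap, map_pi_id_eq,
    AlgHom.toLinearMap_apply, AlgHom.commutes]

lemma cv_T_jS (π : H →ₐ[k] H₀) :
    cv (C := H₀ ⊗[k] H) (Tlm π) ((Algebra.TensorProduct.includeRight : H →ₐ[k] H₀ ⊗[k] H).toLinearMap ∘ₗ
        (HopfAlgebra.antipode k : H →ₗ[k] H)) =
      (Algebra.TensorProduct.includeLeft : H₀ →ₐ[k] H₀ ⊗[k] H).toLinearMap ∘ₗ π.toLinearMap := by
  ext h
  set r := Coalgebra.Repr.arbitrary k h with hr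
  set a₁ : (i : H × H) → Coalgebra.Repr k (r.left i) (H × H) := fun i => Coalgebra.Repr.arbitrary k _
  set a₂ : (i : H × H) → Coalgebra.Repr k (r.right i) (H × H) := fun i => Coalgebra.Repr.arbitrary k _
  have key := Coalgebra.sum_tmul_tmul_eq r a₁ a₂
  have key2 := congrArg (TensorProduct.map π.toLinearMap
    (LinearMap.mul' k H ∘ₗ LinearMap.lTensor H (HopfAlgebra.antipode (R := k)))) key
  simp only [map_sum, TensorProduct.map_tmul, LinearMap.comp_apply, LinearMap.lTensor_tmul,
    LinearMap.mul'_apply, AlgHom.toLinearMap_apply] at key2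
  rw [cv_repr _ _ r]
  calc ∑ i ∈ r.index, Tlm π (r.left i) *
        ((Algebra.TensorProduct.includeRight : H →ₐ[k] H₀ ⊗[k] H).toLinearMap ∘ₗ
          (HopfAlgebra.antipode k : H →ₗ[k] H)) (r.right i)
      = ∑ i ∈ r.index, ∑ j ∈ (a₁ i).index,
          π ((a₁ i).left j) ⊗ₜ[k]
            ((a₁ i).right j * HopfAlgebra.antipode (R := k) (r.right i)) := by
        refine Finset.sum_congr rfl fun i _ => ?_
        rw [Tlm_repr π (a₁ i), Finset.sum_mul]
        refine Finset.sum_congr rfl fun j _ => ?_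
        simp [Algebra.TensorProduct.tmul_mul_tmul]
    _ = ∑ i ∈ r.index, ∑ j ∈ (a₂ i).index,
          π (r.left i) ⊗ₜ[k]
            ((a₂ i).left j * HopfAlgebra.antipode (R := k) ((a₂ i).right j)) := key2
    _ = ∑ i ∈ r.index,
          π (r.left i) ⊗ₜ[k] algebraMap k H (Coalgebra.counit (R := k) (r.right i)) := by
        refine Finset.sum_congr rfl fun i _ => ?_
        rw [← TensorProduct.tmul_sum, HopfAlgebra.sum_mul_antipode_eq_algebraMap_counit (a₂ i)]
    _ = π h ⊗ₜ[k] 1 := by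
        have h1 : ∀ i, π (r.left i) ⊗ₜ[k] algebraMap k H (Coalgebra.counit (R := k) (r.right i))
            = (Coalgebra.counit (R := k) (r.right i) • π (r.left i)) ⊗ₜ[k] (1 : H) := fun i => by
          rw [Algebra.algebraMap_eq_smul_one, tmul_smul, smul_tmul']
        simp_rw [h1]
        rw [← TensorProduct.sum_tmul]
        congr 1
        calc ∑ i ∈ r.index, Coalgebra.counit (R := k) (r.right i) • π (r.left i)
            = π (∑ i ∈ r.index, Coalgebra.counit (R := k) (r.right i) • r.left i) := by
              rw [map_sum]; simp_rw [map_smul]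
          _ = π h := by rw [sum_smul_counit_left r]

lemma mulLeft_T_eq (π : H →ₐ[k] H₀) (y : H) :
    LinearMap.mulLeft k ((1 : H₀) ⊗ₜ[k] y) ∘ₗ Tlm π =
      cv (C := H₀ ⊗[k] H) ((Algebra.TensorProduct.includeLeft : H₀ →ₐ[k] H₀ ⊗[k] H).toLinearMap ∘ₗ π.toLinearMap)
        ((Algebra.TensorProduct.includeRight : H →ₐ[k] H₀ ⊗[k] H).toLinearMap ∘ₗ
          LinearMap.mulLeft k y) := by
  ext h
  set r := Coalgebra.Repr.arbitrary k h
  rw [LinearMap.comp_apply, LinearMap.mulLeft_apply, Tlm_repr π r, Finset.mul_sum,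
    cv_repr _ _ r]
  refine Finset.sum_congr rfl fun i _ => ?_
  simp [Algebra.TensorProduct.tmul_mul_tmul]

end MapsAux

open TensorProduct

variable (k H H₀ : Type*) [Field k] [Ring H] [HopfAlgebra k H] [Ring H₀] [HopfAlgebra k H₀]

/-- The right adjoint action `y ◁ h := S(h_(1)) y h_(2)` of `H` on itself. -/
noncomputable def adAct (y h : H) : H :=
  TensorProduct.lift
    (LinearMap.mk₂ k (fun a b => (HopfAlgebra.antipode (R := k) a) * y * b)
      (fun a a' b => by simp [map_add, add_mul])
      (fun c a b => by simp [map_smul, smul_mul_assoc])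
      (fun a b b' => by simp [mul_add])
      (fun c a b => by simp [mul_smul_comm]))
    (Coalgebra.comul (R := k) h)

/-- Let `H` be a Hopf algebra, `J` a Hopf ideal, `H₀ = H/J` with projection `π`
(a Hopf algebra map), and let `K = {y ∈ H : π(y_(1)) ⊗ y_(2) = 1 ⊗ y}` be the left
`H₀`-coinvariants.  Then `K` is stable under the right adjoint action
`y ◁ h = S(h_(1)) y h_(2)` of `H`. -/
theorem coinvariants_adjoint_stable
    (π : H →ₐ[k] H₀) (hsurj : Function.Surjective π)
    (hπcomul : ∀ h : H, Coalgebra.comul (R := k) (π h) =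
      (TensorProduct.map π.toLinearMap π.toLinearMap) (Coalgebra.comul (R := k) h))
    (hπcounit : ∀ h : H, Coalgebra.counit (R := k) (π h) = Coalgebra.counit (R := k) h)
    (hπS : ∀ h : H, π (HopfAlgebra.antipode (R := k) h) =
      HopfAlgebra.antipode (R := k) (π h)) :
    ∀ y : H,
      (TensorProduct.map π.toLinearMap LinearMap.id) (Coalgebra.comul (R := k) y) =
        (1 : H₀) ⊗ₜ[k] y →
      ∀ g : H,
        (TensorProduct.map π.toLinearMap LinearMap.id)
            (Coalgebra.comul (R := k) (adAct k H y g)) =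
          (1 : H₀) ⊗ₜ[k] (adAct k H y g) := by
  intro y hy g
  have hTy : Tlm π y = (1 : H₀) ⊗ₜ[k] y := hy
  set r := Coalgebra.Repr.arbitrary k g with hrdef
  have hAd : adAct k H y g =
      ∑ i ∈ r.index, HopfAlgebra.antipode (R := k) (r.left i) * y * r.right i := by
    unfold adAct
    rw [← r.eq, map_sum]
    simp
  show Tlm π (adAct k H y g) = (1 : H₀) ⊗ₜ[k] adAct k H y g
  set jS := (Algebra.TensorProduct.includeRight : H →ₐ[k] H₀ ⊗[k] H).toLinearMap ∘ₗ
    (HopfAlgebra.antipode k : H →ₗ[k] H) with hjS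
  set Q := (Algebra.TensorProduct.includeRight : H →ₐ[k] H₀ ⊗[k] H).toLinearMap ∘ₗ
    LinearMap.mulLeft k y with hQ
  have step1 : Tlm π (adAct k H y g) =
      cv (Tlm π ∘ₗ HopfAlgebra.antipode k) (LinearMap.mulLeft k ((1 : H₀) ⊗ₜ[k] y) ∘ₗ Tlm π) g := by
    rw [hAd, map_sum, cv_repr _ _ r]
    refine Finset.sum_congr rfl fun i _ => ?_
    rw [Tlm_mul, Tlm_mul, hTy, LinearMap.comp_apply, LinearMap.comp_apply,
      LinearMap.mulLeft_apply, mul_assoc]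
  have step2 : cv jS Q g = (1 : H₀) ⊗ₜ[k] adAct k H y g := by
    rw [cv_repr _ _ r, hAd, tmul_sum]
    refine Finset.sum_congr rfl fun i _ => ?_
    simp [hjS, hQ, Algebra.TensorProduct.tmul_mul_tmul, mul_assoc]
  rw [step1, mulLeft_T_eq π y, ← cv_T_jS π, ← hjS, ← hQ, cv_assoc,
    ← cv_assoc (Tlm π ∘ₗ HopfAlgebra.antipode k) (Tlm π) (cv jS Q),
    cv_antipode_left (Tlm π) (Tlm_mul π) (Tlm_algebraMap π), cvUnit_cv]
  exact step2
end

section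
/- Let B = A^{co H} ⊆ A be an H-Galois extension with translation map τ. The Miyashita–Ulbrich action x ◁ h := h^<1> x h^<2> is well defined on the centralizer Z_A(B) = {x ∈ A : xb = bx for all b ∈ B} and makes Z_A(B) a right H-module. -/
open TensorProduct

variable (k H A : Type*) [Field k] [Ring H] [HopfAlgebra k H] [Ring A] [Algebra k A]

/-- The bilinear "sandwich" map `(u, v) ↦ u * x * v`. -/
noncomputable def sandwich (x : A) : A →ₗ[k] A →ₗ[k] A :=
  LinearMap.mk₂ k (fun u v => u * x * v)
    (fun u u' v => by simp [add_mul])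
    (fun c u v => by simp [smul_mul_assoc])
    (fun u v v' => by simp [mul_add])
    (fun c u v => by simp [mul_smul_comm])

/-- Given a lift `τ : H → A ⊗ A` of the translation map, the Miyashita–Ulbrich operator
`T_τ(h)(x) = h^<1> x h^<2>`. -/
noncomputable def Tact (τ : H →ₗ[k] A ⊗[k] A) (h : H) (x : A) : A :=
  TensorProduct.lift (sandwich k A x) (τ h)

/-- The canonical map at the level of `A ⊗[k] A`: `a' ⊗ a ↦ a' a_(0) ⊗ a_(1)`. -/
noncomputable def chi0 (δ : A →ₐ[k] A ⊗[k] H) : A ⊗[k] A →ₗ[k] A ⊗[k] H :=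
  (LinearMap.mul' k (A ⊗[k] H)) ∘ₗ
    (TensorProduct.map (Algebra.TensorProduct.includeLeft : A →ₐ[k] A ⊗[k] H).toLinearMap
      δ.toLinearMap)

/-- The submodule of `B`-balanced relations in `A ⊗[k] A`, i.e. the kernel of the projection
`A ⊗[k] A → A ⊗_B A`, where `B = A^{co H}`. -/
noncomputable def balanced (δ : A →ₐ[k] A ⊗[k] H) : Submodule k (A ⊗[k] A) :=
  Submodule.span k
    {w : A ⊗[k] A | ∃ a c b : A, δ b = b ⊗ₜ[k] 1 ∧ w = (a * b) ⊗ₜ[k] c - a ⊗ₜ[k] (b * c)}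

lemma lift_sandwich_tmul (x u v : A) :
    TensorProduct.lift (sandwich k A x) (u ⊗ₜ[k] v) = u * x * v := rfl

lemma chi0_tmul (δ : A →ₐ[k] A ⊗[k] H) (u v : A) :
    chi0 k H A δ (u ⊗ₜ[k] v) = (u ⊗ₜ[k] (1 : H)) * δ v := by
  simp [chi0, LinearMap.mul'_apply]

lemma lift_sandwich_balanced (δ : A →ₐ[k] A ⊗[k] H) (x : A)
    (hx : ∀ b : A, δ b = b ⊗ₜ[k] 1 → x * b = b * x)
    {w : A ⊗[k] A} (hw : w ∈ balanced k H A δ) :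
    TensorProduct.lift (sandwich k A x) w = 0 := by
  induction hw using Submodule.span_induction with
  | mem w hw =>
      obtain ⟨a, c, b, hb, rfl⟩ := hw
      rw [map_sub, lift_sandwich_tmul, lift_sandwich_tmul, sub_eq_zero,
        mul_assoc a b x, ← hx b hb]
      simp [mul_assoc]
  | zero => simp
  | add u v hu hv ihu ihv => simp [map_add, ihu, ihv]
  | smul c u hu ihu => simp [map_smul, ihu]

lemma lift_sandwich_congr (δ : A →ₐ[k] A ⊗[k] H)
    (hinj : ∀ u : A ⊗[k] A, chi0 k H A δ u = 0 → u ∈ balanced k H A δ)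
    (x : A) (hx : ∀ b : A, δ b = b ⊗ₜ[k] 1 → x * b = b * x)
    {u v : A ⊗[k] A} (h : chi0 k H A δ u = chi0 k H A δ v) :
    TensorProduct.lift (sandwich k A x) u = TensorProduct.lift (sandwich k A x) v := by
  have h0 := lift_sandwich_balanced k H A δ x hx
    (hinj (u - v) (by rw [map_sub, h, sub_self]))
  rw [map_sub, sub_eq_zero] at h0
  exact h0

noncomputable def sandwichT : A ⊗[k] A →ₗ[k] A ⊗[k] A →ₗ[k] A ⊗[k] A :=
  TensorProduct.lift (LinearMap.mk₂ k
    (fun u v => (LinearMap.mulLeft k (u ⊗ₜ[k] (1:A))) ∘ₗ (LinearMap.mulRight k ((1:A) ⊗ₜ[k] v)))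
    (fun u u' v => by ext w; simp [add_tmul, add_mul])
    (fun c u v => by ext w; simp [smul_tmul', smul_mul_assoc])
    (fun u v v' => by ext w; simp [tmul_add, mul_add])
    (fun c u v => by ext w; simp [tmul_smul, mul_smul_comm]))

lemma sandwichT_tmul (u v : A) (w : A ⊗[k] A) :
    sandwichT k A (u ⊗ₜ[k] v) w = (u ⊗ₜ[k] (1:A)) * (w * ((1:A) ⊗ₜ[k] v)) := rfl

lemma lift_sandwich_sandwichT (x : A) (w' w : A ⊗[k] A) :
    TensorProduct.lift (sandwich k A x) (sandwichT k A w' w) =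
    TensorProduct.lift (sandwich k A (TensorProduct.lift (sandwich k A x) w)) w' := by
  induction w' using TensorProduct.induction_on with
  | zero => simp
  | tmul u v =>
      rw [sandwichT_tmul]
      induction w using TensorProduct.induction_on with
      | zero =>
          rw [zero_mul, mul_zero, map_zero, lift_sandwich_tmul]
          simp
      | tmul p q =>
          simp only [Algebra.TensorProduct.tmul_mul_tmul, lift_sandwich_tmul, one_mul, mul_one]
          simp [mul_assoc]
      | add w1 w2 ih1 ih2 =>
          rw [add_mul, mul_add, map_add, ih1, ih2, map_add]
          simp only [lift_sandwich_tmul, mul_add, add_mul]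
  | add w1 w2 ih1 ih2 => simp [map_add, ih1, ih2]

lemma chi0_mulLeft (δ : A →ₐ[k] A ⊗[k] H) (b : A) (w : A ⊗[k] A) :
    chi0 k H A δ ((b ⊗ₜ[k] (1:A)) * w) = (b ⊗ₜ[k] (1:H)) * chi0 k H A δ w := by
  induction w using TensorProduct.induction_on with
  | zero => simp
  | tmul p q =>
      rw [Algebra.TensorProduct.tmul_mul_tmul, chi0_tmul, chi0_tmul, one_mul,
        ← mul_assoc, Algebra.TensorProduct.tmul_mul_tmul, one_mul]
  | add w1 w2 ih1 ih2 => rw [mul_add, map_add, ih1, ih2, map_add, mul_add]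

lemma chi0_mulRight (δ : A →ₐ[k] A ⊗[k] H) (b : A) (hb : δ b = b ⊗ₜ[k] 1) (w : A ⊗[k] A) :
    chi0 k H A δ (w * ((1:A) ⊗ₜ[k] b)) = chi0 k H A δ w * (b ⊗ₜ[k] (1:H)) := by
  induction w using TensorProduct.induction_on with
  | zero => simp
  | tmul p q =>
      rw [Algebra.TensorProduct.tmul_mul_tmul, mul_one, chi0_tmul, chi0_tmul, map_mul, hb,
        mul_assoc]
  | add w1 w2 ih1 ih2 => rw [add_mul, map_add, ih1, ih2, map_add, add_mul]

lemma lift_sandwich_mulLeft (x b : A) (w : A ⊗[k] A) :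
    TensorProduct.lift (sandwich k A x) ((b ⊗ₜ[k] (1:A)) * w) =
      b * TensorProduct.lift (sandwich k A x) w := by
  induction w using TensorProduct.induction_on with
  | zero => simp
  | tmul p q =>
      rw [Algebra.TensorProduct.tmul_mul_tmul, one_mul, lift_sandwich_tmul, lift_sandwich_tmul]
      simp [mul_assoc]
  | add w1 w2 ih1 ih2 => rw [mul_add, map_add, ih1, ih2, map_add, mul_add]

lemma lift_sandwich_mulRight (x b : A) (w : A ⊗[k] A) :
    TensorProduct.lift (sandwich k A x) (w * ((1:A) ⊗ₜ[k] b)) =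
      TensorProduct.lift (sandwich k A x) w * b := by
  induction w using TensorProduct.induction_on with
  | zero => simp
  | tmul p q =>
      rw [Algebra.TensorProduct.tmul_mul_tmul, mul_one, lift_sandwich_tmul, lift_sandwich_tmul]
      simp [mul_assoc]
  | add w1 w2 ih1 ih2 => rw [add_mul, map_add, ih1, ih2, map_add, add_mul]

lemma chi0_sandwichT_pure (δ : A →ₐ[k] A ⊗[k] H) (u v : A) (w : A ⊗[k] A) :
    chi0 k H A δ (sandwichT k A (u ⊗ₜ[k] v) w) =
      (u ⊗ₜ[k] (1:H)) * chi0 k H A δ w * δ v := by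
  induction w using TensorProduct.induction_on with
  | zero => simp [sandwichT_tmul]
  | tmul p q =>
      rw [sandwichT_tmul, Algebra.TensorProduct.tmul_mul_tmul, mul_one,
        Algebra.TensorProduct.tmul_mul_tmul, one_mul, chi0_tmul, chi0_tmul, map_mul,
        ← mul_assoc, ← mul_assoc, Algebra.TensorProduct.tmul_mul_tmul, one_mul]
  | add w1 w2 ih1 ih2 =>
      rw [map_add, map_add, map_add, ih1, ih2, mul_add, add_mul]

lemma map_id_mulLeft (g : H) (u : A) (z : A ⊗[k] H) :
    TensorProduct.map LinearMap.id (LinearMap.mulLeft k g) ((u ⊗ₜ[k] (1:H)) * z) =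
      (u ⊗ₜ[k] g) * z := by
  induction z using TensorProduct.induction_on with
  | zero => simp
  | tmul a h => simp [Algebra.TensorProduct.tmul_mul_tmul]
  | add z1 z2 ih1 ih2 => rw [mul_add, map_add, ih1, ih2, mul_add]

lemma chi0_sandwichT_tau (δ : A →ₐ[k] A ⊗[k] H) (g : H) (tg : A ⊗[k] A)
    (htg : chi0 k H A δ tg = 1 ⊗ₜ[k] g) (w' : A ⊗[k] A) :
    chi0 k H A δ (sandwichT k A w' tg) =
      TensorProduct.map LinearMap.id (LinearMap.mulLeft k g) (chi0 k H A δ w') := by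
  induction w' using TensorProduct.induction_on with
  | zero => simp
  | tmul u v =>
      rw [chi0_sandwichT_pure, htg, chi0_tmul, Algebra.TensorProduct.tmul_mul_tmul,
        one_mul, mul_one, map_id_mulLeft]
  | add w1 w2 ih1 ih2 =>
      simp [map_add, LinearMap.add_apply, ih1, ih2]

/-- Let `B = A^{co H} ⊆ A` be an `H`-Galois extension with translation map `τ` (encoded by a
lift `τ : H → A ⊗[k] A` with `χ₀ ∘ τ = 1 ⊗ ·`; bijectivity of the canonical map `χ` is
encoded by `hτ` (surjectivity) and `hinj` (injectivity)).  The Miyashita–Ulbrich action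
`x ◁ h := h^<1> x h^<2>` is well defined on the centralizer
`Z_A(B) = {x : x b = b x for all b ∈ B}` (it does not depend on the chosen lift of the
translation map), takes values in `Z_A(B)`, and makes `Z_A(B)` a right `H`-module. -/
theorem miyashita_ulbrich_action
    (δ : A →ₐ[k] A ⊗[k] H)
    (hcounit : ∀ a : A,
      (TensorProduct.rid k A)
        ((TensorProduct.map LinearMap.id (Coalgebra.counit (R := k) (A := H))) (δ a)) = a)
    (hcoassoc : ∀ a : A,
      (TensorProduct.assoc k A H H)
        ((TensorProduct.map δ.toLinearMap LinearMap.id) (δ a)) =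
      (TensorProduct.map LinearMap.id (Coalgebra.comul (R := k) (A := H))) (δ a))
    (τ : H →ₗ[k] A ⊗[k] A)
    (hτ : ∀ h : H, chi0 k H A δ (τ h) = 1 ⊗ₜ[k] h)
    (hinj : ∀ u : A ⊗[k] A, chi0 k H A δ u = 0 → u ∈ balanced k H A δ) :
    (∀ τ' : H →ₗ[k] A ⊗[k] A, (∀ h : H, chi0 k H A δ (τ' h) = 1 ⊗ₜ[k] h) →
      ∀ (h : H) (x : A), (∀ b : A, δ b = b ⊗ₜ[k] 1 → x * b = b * x) →
        Tact k H A τ h x = Tact k H A τ' h x) ∧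
    (∀ (h : H) (x : A), (∀ b : A, δ b = b ⊗ₜ[k] 1 → x * b = b * x) →
      ∀ b : A, δ b = b ⊗ₜ[k] 1 → (Tact k H A τ h x) * b = b * (Tact k H A τ h x)) ∧
    (∀ x : A, (∀ b : A, δ b = b ⊗ₜ[k] 1 → x * b = b * x) → Tact k H A τ 1 x = x) ∧
    (∀ (g g' : H) (x : A), (∀ b : A, δ b = b ⊗ₜ[k] 1 → x * b = b * x) →
      Tact k H A τ (g * g') x = Tact k H A τ g' (Tact k H A τ g x)) := by
  refine ⟨?_, ?_, ?_, ?_⟩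
  · intro τ' hτ' h x hx
    exact lift_sandwich_congr k H A δ hinj x hx ((hτ h).trans (hτ' h).symm)
  · intro h x hx b hb
    have hchi : chi0 k H A δ ((b ⊗ₜ[k] (1:A)) * τ h - τ h * ((1:A) ⊗ₜ[k] b)) = 0 := by
      rw [map_sub, chi0_mulLeft, chi0_mulRight k H A δ b hb, hτ,
        Algebra.TensorProduct.tmul_mul_tmul, Algebra.TensorProduct.tmul_mul_tmul,
        one_mul, mul_one, one_mul, mul_one, sub_self]
    have h0 := lift_sandwich_balanced k H A δ x hx (hinj _ hchi)
    rw [map_sub, lift_sandwich_mulLeft, lift_sandwich_mulRight, sub_eq_zero] at h0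
    exact h0.symm
  · intro x hx
    have : Tact k H A τ 1 x =
        TensorProduct.lift (sandwich k A x) ((1:A) ⊗ₜ[k] (1:A)) := by
      refine lift_sandwich_congr k H A δ hinj x hx ?_
      rw [hτ, chi0_tmul, map_one, Algebra.TensorProduct.one_def,
        Algebra.TensorProduct.tmul_mul_tmul, one_mul, mul_one]
    rw [this, lift_sandwich_tmul, one_mul, mul_one]
  · intro g g' x hx
    have hchi : chi0 k H A δ (τ (g * g')) =
        chi0 k H A δ (sandwichT k A (τ g') (τ g)) := by
      rw [hτ, chi0_sandwichT_tau k H A δ g (τ g) (hτ g), hτ]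
      simp
    have := lift_sandwich_congr k H A δ hinj x hx hchi
    rw [Tact, this, lift_sandwich_sandwichT]
    rfl
end

section
/- In Õ_q(GL(2))[c^{-1}], the assignment γ₂(D̃^p t^m n^r) = (-1)^p q^p D^p c^m d^r on the basis {D̃^p t^m n^r : m,p ∈ ℤ, r ∈ ℕ} of H = Õ_q(GL(2))/(c) defines a right H-comodule map γ₂: H → A₂, i.e., δ₂ ∘ γ₂ = (γ₂ ⊗ id) ∘ Δ. -/
open TensorProduct

variable {k A H : Type*} [Field k] [Ring A] [Algebra k A] [Ring H] [Bialgebra k H]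

/-- The cleaving map `γ₂ : H → A₂` defined on the basis `{D̃^p t^m n^r}` of
`H = Õ_q(GL(2))/(c)` by `γ₂(D̃^p t^m n^r) = (-1)^p q^p D^p c^m d^r`. -/
noncomputable def gammaTwo (q : kˣ) (d : A) (cu Du : Aˣ)
    (bH : Module.Basis (ℤ × ℤ × ℕ) k H) : H →ₗ[k] A :=
  bH.constr k fun pmr =>
    ((((-q) ^ pmr.1 : kˣ) : k)) •
      (((Du ^ pmr.1 : Aˣ) : A) * ((cu ^ pmr.2.1 : Aˣ) : A) * d ^ pmr.2.2)

/-- In `A₂ = Õ_q(GL(2))[c⁻¹]`, the assignment `γ₂(D̃^p t^m n^r) = (-1)^p q^p D^p c^m d^r`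
on the basis `{D̃^p t^m n^r : m,p ∈ ℤ, r ∈ ℕ}` of `H = Õ_q(GL(2))/(c)` defines a right
`H`-comodule map `γ₂ : H → A₂`, i.e. `δ₂ ∘ γ₂ = (γ₂ ⊗ id) ∘ Δ`. -/
theorem gammaTwo_comodule_map (q : kˣ)
    (d : A) (cu Du : Aˣ) (t Dt : Hˣ) (n : H)
    (bH : Module.Basis (ℤ × ℤ × ℕ) k H)
    (hbH : ∀ (p m : ℤ) (r : ℕ),
      bH (p, m, r) = ((Dt ^ p : Hˣ) : H) * ((t ^ m : Hˣ) : H) * n ^ r)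
    -- group-like generators and the comultiplication of the powers of `n`
    (hgt : ∀ m : ℤ, Coalgebra.comul (R := k) ((t ^ m : Hˣ) : H) =
      ((t ^ m : Hˣ) : H) ⊗ₜ[k] ((t ^ m : Hˣ) : H))
    (hgD : ∀ p : ℤ, Coalgebra.comul (R := k) ((Dt ^ p : Hˣ) : H) =
      ((Dt ^ p : Hˣ) : H) ⊗ₜ[k] ((Dt ^ p : Hˣ) : H))
    (hΔnr : ∀ r : ℕ, Coalgebra.comul (R := k) (n ^ r) =
      ∑ j ∈ Finset.range (r + 1),
        ((r.choose j : k) * ((q ^ (j * (r - j)) : kˣ) : k)) •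
          ((((t ^ j : Hˣ) : H) * n ^ (r - j)) ⊗ₜ[k]
            (((Dt ^ (r - j) : Hˣ) : H) * ((t ^ ((j : ℤ) - (r : ℤ)) : Hˣ) : H) * n ^ j)))
    -- the coaction on `A₂`
    (δ : A →ₐ[k] A ⊗[k] H)
    (hδc : ∀ m : ℤ, δ ((cu ^ m : Aˣ) : A) = ((cu ^ m : Aˣ) : A) ⊗ₜ[k] ((t ^ m : Hˣ) : H))
    (hδD : ∀ p : ℤ, δ ((Du ^ p : Aˣ) : A) = ((Du ^ p : Aˣ) : A) ⊗ₜ[k] ((Dt ^ p : Hˣ) : H))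
    (hδdr : ∀ r : ℕ, δ (d ^ r) =
      ∑ j ∈ Finset.range (r + 1),
        ((r.choose j : k) * ((q ^ (j * (r - j)) : kˣ) : k)) •
          ((((cu ^ j : Aˣ) : A) * d ^ (r - j)) ⊗ₜ[k]
            (((Dt ^ (r - j) : Hˣ) : H) * ((t ^ ((j : ℤ) - (r : ℤ)) : Hˣ) : H) * n ^ j))) :
    ∀ h : H, δ (gammaTwo q d cu Du bH h) =
      (TensorProduct.map (gammaTwo q d cu Du bH) LinearMap.id)
        (Coalgebra.comul (R := k) h) := by
  suffices hmaps : δ.toLinearMap ∘ₗ gammaTwo q d cu Du bH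
      = TensorProduct.map (gammaTwo q d cu Du bH) LinearMap.id ∘ₗ
          Coalgebra.comul (R := k) by
    intro h
    exact LinearMap.congr_fun hmaps h
  have hcm : ∀ x y : H, Coalgebra.comul (R := k) (x * y) =
      Coalgebra.comul (R := k) x * Coalgebra.comul (R := k) y := fun x y => by
    exact map_mul (Bialgebra.comulAlgHom k H) x y
  apply bH.ext
  rintro ⟨p, m, r⟩
  simp only [LinearMap.comp_apply]
  rw [show gammaTwo q d cu Du bH (bH (p, m, r)) =
      (((-q) ^ p : kˣ) : k) •
        (((Du ^ p : Aˣ) : A) * ((cu ^ m : Aˣ) : A) * d ^ r) from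
    bH.constr_basis k _ _]
  rw [map_smul]
  simp only [AlgHom.toLinearMap_apply]
  rw [map_mul, map_mul, hδD, hδc, hδdr, hbH, hcm, hcm, hgD, hgt, hΔnr]
  rw [Finset.mul_sum, Finset.mul_sum, Finset.smul_sum, map_sum]
  refine Finset.sum_congr rfl fun j hj => ?_
  rw [mul_smul_comm, mul_smul_comm, Algebra.TensorProduct.tmul_mul_tmul,
    Algebra.TensorProduct.tmul_mul_tmul, Algebra.TensorProduct.tmul_mul_tmul,
    Algebra.TensorProduct.tmul_mul_tmul]
  rw [map_smul, TensorProduct.map_tmul]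
  rw [smul_comm ((((-q) ^ p : kˣ) : k))]
  congr 1
  rw [TensorProduct.smul_tmul']
  congr 1
  have hH : ((Dt ^ p : Hˣ) : H) * ((t ^ m : Hˣ) : H) *
      (((t ^ j : Hˣ) : H) * n ^ (r - j)) = bH (p, m + (j : ℤ), r - j) := by
    rw [hbH, zpow_add, zpow_natCast, Units.val_mul, mul_assoc, mul_assoc,
      mul_assoc]
  rw [hH,
    show gammaTwo q d cu Du bH (bH (p, m + (j : ℤ), r - j)) =
      (((-q) ^ p : kˣ) : k) •
        (((Du ^ p : Aˣ) : A) * ((cu ^ (m + (j : ℤ)) : Aˣ) : A) * d ^ (r - j)) from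
      bH.constr_basis k _ _]
  congr 1
  rw [zpow_add, zpow_natCast, Units.val_mul, mul_assoc, mul_assoc, mul_assoc]
end
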